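/- For all real numbers $x, y$, the inequality $|x^- - y^-|^p \leq |x-y|^{p-2}(x-y)(y^- - x^-)$ holds, where $t^- = \max(-t, 0)$ denotes the negative part and $p > 1$. -/
import Mathlib


/-- For all real `x, y` and `p > 1`, with `t⁻ = max (-t) 0` the negative part,
`|x⁻ - y⁻|^p ≤ |x-y|^(p-2) (x-y) (y⁻ - x⁻)` (the expression `|x-y|^(p-2)(x-y)` being `0`
when `x = y`, which is automatic with real powers). -/
theorem neg_part_inequality (p : ℝ) (hp : 1 < p) (x y : ℝ) :
    |max (-x) 0 - max (-y) 0| ^ p ≤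
      |x - y| ^ (p - 2) * (x - y) * (max (-y) 0 - max (-x) 0) := by
  set a := max (-x) 0 with ha
  set b := max (-y) 0 with hb
  have hlip : |a - b| ≤ |x - y| := by
    calc |a - b| ≤ |(-x) - (-y)| := abs_max_sub_max_le_abs _ _ _
    _ = |x - y| := by rw [show -x - -y = -(x - y) by ring, abs_neg]
  have h2 : 0 ≤ (x - y) * (b - a) := by
    rcases le_total x y with h | h
    · have h1 : b ≤ a := max_le_max (by linarith) le_rfl
      nlinarith
    · have h1 : a ≤ b := max_le_max (by linarith) le_rfl
      exact mul_nonneg (by linarith) (by linarith)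
  by_cases hab : a = b
  · have h0 : |a - b| ^ p = 0 := by
      rw [hab, sub_self, abs_zero, Real.zero_rpow (by linarith)]
    rw [h0, mul_assoc]
    exact mul_nonneg (Real.rpow_nonneg (abs_nonneg _) _) h2
  · have habs : 0 < |a - b| := abs_pos.mpr (sub_ne_zero.mpr hab)
    have hxy : 0 < |x - y| := lt_of_lt_of_le habs hlip
    have key : (x - y) * (b - a) = |x - y| * |a - b| := by
      rw [← abs_of_nonneg h2, abs_mul, abs_sub_comm a b]
    rw [mul_assoc, key, ← mul_assoc, ← Real.rpow_add_one hxy.ne',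
      show p - 2 + 1 = p - 1 by ring]
    have hL : |a - b| ^ p = |a - b| ^ (p - 1) * |a - b| := by
      rw [← Real.rpow_add_one habs.ne']; ring_nf
    rw [hL]
    exact mul_le_mul_of_nonneg_right
      (Real.rpow_le_rpow (abs_nonneg _) hlip (by linarith)) (abs_nonneg _)
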